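/- Let f : ℕ → ℂ be finitely supported with support contained in {0, 1, ..., n}. Then the Abel transform A f (defined by A f(h) = Q^(|h|/2) f(|h|) + σ ∑_{j≥1} Q^(|h|/2+j-1) f(|h|+2j-1) + ((r-2)/(r-1)) ∑_{j≥1} Q^(|h|/2+j) f(|h|+2j)) has support contained in {h ∈ ℤ : |h| ≤ n}. Conversely, if k ≤ r and the support of A f is contained in {|h| ≤ n}, then the support of f is contained in {0, ..., n}. -/

import Mathlib

theorem stmt5 (k r : ℕ) (hk : 2 ≤ k) (hr : 2 ≤ r)
    (Q : ℝ) (hQ : Q = ((r : ℝ) - 1) * ((k : ℝ) - 1))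
    (f : ℕ → ℂ) (hf : (Function.support f).Finite)
    (A : ℤ → ℂ)
    (hA : ∀ h : ℤ, A h =
      ((Q ^ ((h.natAbs : ℝ) / 2) : ℝ) : ℂ) * f h.natAbs
      + ((k : ℂ) - 2) *
          ∑' j : ℕ, ((Q ^ ((h.natAbs : ℝ) / 2 + (j : ℝ)) : ℝ) : ℂ) * f (h.natAbs + 2 * j + 1)
      + (((r : ℂ) - 2) / ((r : ℂ) - 1)) *
          ∑' j : ℕ, ((Q ^ ((h.natAbs : ℝ) / 2 + (j : ℝ) + 1) : ℝ) : ℂ) * f (h.natAbs + 2 * j + 2))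
    (n : ℕ) :
    ((∀ m : ℕ, n < m → f m = 0) → ∀ h : ℤ, (n : ℤ) < |h| → A h = 0) ∧
    (k ≤ r → (∀ h : ℤ, (n : ℤ) < |h| → A h = 0) → ∀ m : ℕ, n < m → f m = 0) := by
  have hQpos : 0 < Q := by
    have h1 : (2:ℝ) ≤ r := by exact_mod_cast hr
    have h2 : (2:ℝ) ≤ k := by exact_mod_cast hk
    rw [hQ]; nlinarith
  constructor
  · intro hsupp h hn
    have hna : n < h.natAbs := by
      have : (n:ℤ) < h.natAbs := by rwa [Int.abs_eq_natAbs] at hn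
      exact_mod_cast this
    have e1 : ∑' j : ℕ, ((Q ^ ((h.natAbs : ℝ) / 2 + (j : ℝ)) : ℝ) : ℂ) *
        f (h.natAbs + 2 * j + 1) = 0 := by
      have : ∀ j : ℕ, ((Q ^ ((h.natAbs : ℝ) / 2 + (j : ℝ)) : ℝ) : ℂ) *
          f (h.natAbs + 2 * j + 1) = 0 := fun j => by
        rw [hsupp _ (by omega)]; ring
      simp only [this, tsum_zero]
    have e2 : ∑' j : ℕ, ((Q ^ ((h.natAbs : ℝ) / 2 + (j : ℝ) + 1) : ℝ) : ℂ) *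
        f (h.natAbs + 2 * j + 2) = 0 := by
      have : ∀ j : ℕ, ((Q ^ ((h.natAbs : ℝ) / 2 + (j : ℝ) + 1) : ℝ) : ℂ) *
          f (h.natAbs + 2 * j + 2) = 0 := fun j => by
        rw [hsupp _ (by omega)]; ring
      simp only [this, tsum_zero]
    rw [hA h, e1, e2, hsupp _ hna]
    ring
  · intro _ hA0 m hm
    obtain ⟨N, hN⟩ := hf.bddAbove
    have hzero : ∀ m', N < m' → f m' = 0 := by
      intro m' h
      by_contra hne
      have : m' ≤ N := hN (Function.mem_support.mpr hne)
      omega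
    have key : ∀ m : ℕ, n < m → (∀ m', m < m' → f m' = 0) → f m = 0 := by
      intro m hm hz
      have hAm := hA0 (m : ℤ) (by
        rw [abs_of_nonneg (by positivity)]; exact_mod_cast hm)
      rw [hA] at hAm
      have hnat : ((m : ℤ)).natAbs = m := Int.natAbs_natCast m
      rw [hnat] at hAm
      have e1 : ∑' j : ℕ, ((Q ^ ((m : ℝ) / 2 + (j : ℝ)) : ℝ) : ℂ) * f (m + 2 * j + 1) = 0 := by
        have : ∀ j : ℕ, ((Q ^ ((m : ℝ) / 2 + (j : ℝ)) : ℝ) : ℂ) * f (m + 2 * j + 1) = 0 :=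
          fun j => by rw [hz _ (by omega)]; ring
        simp [this]
      have e2 : ∑' j : ℕ, ((Q ^ ((m : ℝ) / 2 + (j : ℝ) + 1) : ℝ) : ℂ) * f (m + 2 * j + 2) = 0 := by
        have : ∀ j : ℕ, ((Q ^ ((m : ℝ) / 2 + (j : ℝ) + 1) : ℝ) : ℂ) * f (m + 2 * j + 2) = 0 :=
          fun j => by rw [hz _ (by omega)]; ring
        simp [this]
      rw [e1, e2] at hAm
      have hAm' : ((Q ^ ((m : ℝ) / 2) : ℝ) : ℂ) * f m = 0 := by
        rw [← hAm]; ring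
      have hQne : ((Q ^ ((m : ℝ) / 2) : ℝ) : ℂ) ≠ 0 := by
        exact_mod_cast (Real.rpow_pos_of_pos hQpos _).ne'
      exact (mul_eq_zero.mp hAm').resolve_left hQne
    have main : ∀ j : ℕ, ∀ m : ℕ, n < m → N ≤ m + j → f m = 0 := by
      intro j
      induction j with
      | zero => exact fun m hm hNm => key m hm (fun m' h => hzero m' (by omega))
      | succ j ih => exact fun m hm hNm => key m hm (fun m' h => ih m' (by omega) (by omega))
    exact main N m hm (by omega)
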